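/- Let t ∈ {0,1}ⁿ be primitive and begin with the digit 1. If ι(t) is not a cyclic shift of t, set μᵢ = F^{i−1}(t) for 1 ≤ i ≤ n; if ι(t) is a cyclic shift of t, set μᵢ = F̃^{i−1}(t^−). Then μ₁,…,μₙ are pairwise distinct, and letting rᵢ denote the lexicographic rank of μᵢ among μ₁,…,μₙ, the permutation σ of {1,…,n} defined by σ(rᵢ) = r_{i+1} (indices mod n) is a cyclic unimodal permutation. -/

import Mathlib

open Finset

namespace Necklaces

variable {n : ℕ}

/-- The cyclic left shift `L` on binary strings of length `n`. -/
def shiftL (s : Fin n → Bool) : Fin n → Bool :=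
  fun i => s ⟨(i.val + 1) % n, Nat.mod_lt _ (Nat.lt_of_le_of_lt (Nat.zero_le _) i.isLt)⟩

/-- Digitwise inversion (complement) `ι`. -/
def inv (s : Fin n → Bool) : Fin n → Bool := fun i => !(s i)

/-- A string is primitive if no nontrivial cyclic shift fixes it. -/
def Primitive (s : Fin n → Bool) : Prop :=
  ∀ k : ℕ, 0 < k → k < n → shiftL^[k] s ≠ s

/-- The necklace `⟨s⟩`: the orbit of `s` under cyclic shifts. -/
def necklace (s : Fin n → Bool) : Set (Fin n → Bool) :=
  {t | ∃ k : ℕ, t = shiftL^[k] s}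

/-- The necklace inversion class `[s]`: the orbit of `s` under cyclic shifts and inversion. -/
def invClass (s : Fin n → Bool) : Set (Fin n → Bool) :=
  {t | ∃ k : ℕ, t = shiftL^[k] s ∨ t = inv (shiftL^[k] s)}

/-- The number of 1's in `s`. -/
def onesCard (s : Fin n → Bool) : ℕ := (univ.filter (fun i => s i = true)).card

/-- The mod-2 partial sum map `Ξ`: the `i`-th digit of `Ξ(s)` is `s₁+⋯+sᵢ (mod 2)`. -/
def xi (s : Fin n → Bool) : Fin n → Bool :=
  fun i => decide (Odd ((Finset.Iic i).filter (fun j => s j = true)).card)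

/-- `ι(s)` is a cyclic shift of `s`. -/
def ReflexiveStr (s : Fin n → Bool) : Prop := ∃ k : ℕ, shiftL^[k] s = inv s

/-- `s` consists of two copies of a primitive string of length `n/2`
with an odd number of 1's. -/
def TwoCopies (s : Fin n → Bool) : Prop :=
  n % 2 = 0 ∧ shiftL^[n / 2] s = s ∧ (∀ k : ℕ, 0 < k → k < n / 2 → shiftL^[k] s ≠ s) ∧
    Odd ((univ.filter (fun i : Fin n => i.val < n / 2 ∧ s i = true)).card)

/-- `s` generates a necklace belonging to `Ñ⁺(n)`. -/
def GoodPlus (s : Fin n → Bool) : Prop :=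
  (Primitive s ∧ Even (onesCard s)) ∨ TwoCopies s

/-- The set `Ñ⁺(n)` of necklaces. -/
def NtildePlus (n : ℕ) : Set (Set (Fin n → Bool)) :=
  {N | ∃ s : Fin n → Bool, GoodPlus s ∧ N = necklace s}

/-- The set `N̄(n)` of necklace inversion classes of primitive strings. -/
def Nbar (n : ℕ) : Set (Set (Fin n → Bool)) :=
  {C | ∃ s : Fin n → Bool, Primitive s ∧ C = invClass s}

/-- Lexicographic order on strings, with `0 < 1` and the leftmost digit most significant. -/
def strLt (s t : Fin n → Bool) : Prop :=
  ∃ i : Fin n, (∀ j : Fin n, j < i → s j = t j) ∧ s i < t i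

/-- Extended lexicographic order on extended strings `s^b`
(`b = false` encodes `−`, `b = true` encodes `+`). -/
def extLt (p q : (Fin n → Bool) × Bool) : Prop :=
  strLt p.1 q.1 ∨ (p.1 = q.1 ∧ p.2 < q.2)

/-- The twisted shift operator `F`. -/
def twistF (s : Fin n → Bool) : Fin n → Bool :=
  if h : 0 < n then
    (if shiftL s ⟨0, h⟩ = true then shiftL s else inv (shiftL s))
  else s

/-- The extended twisted shift operator `F̃`. -/
def extF (p : (Fin n → Bool) × Bool) : (Fin n → Bool) × Bool :=
  if h : 0 < n then
    (if twistF p.1 ⟨n - 1, Nat.sub_lt h Nat.one_pos⟩ = true then (twistF p.1, p.2)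
     else (twistF p.1, !p.2))
  else p

/-- Cyclic successor on `Fin n`. -/
def finSucc (i : Fin n) : Fin n :=
  ⟨(i.val + 1) % n, Nat.mod_lt _ (Nat.lt_of_le_of_lt (Nat.zero_le _) i.isLt)⟩

open scoped Classical in
/-- The (0-based) lexicographic rank of `μ i` among `μ₁,…,μₙ`:
the number of indices `j` with `μ j` strictly smaller than `μ i`. -/
noncomputable def rankOf {X : Type*} (lt : X → X → Prop) (μ : Fin n → X) (i : Fin n) : ℕ :=
  (univ.filter (fun j => lt (μ j) (μ i))).card

/-- `σ` is the cyclic permutation `(r₁ r₂ ⋯ rₙ)` built from the ranks `rᵢ` of `μᵢ`: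
`σ(rᵢ) = r_{i+1}` (indices mod `n`). -/
def BuiltFrom {X : Type*} (lt : X → X → Prop) (μ : Fin n → X) (σ : Equiv.Perm (Fin n)) : Prop :=
  ∀ i j : Fin n, rankOf lt μ i = j.val → (σ j).val = rankOf lt μ (finSucc i)

/-- `σ` consists of a single `n`-cycle. -/
def IsCyclicPerm (σ : Equiv.Perm (Fin n)) : Prop :=
  ∀ x y : Fin n, ∃ k : ℕ, (σ ^ k) x = y

/-- `σ` is unimodal: decreasing on an initial segment, then increasing. -/
def IsUnimodal (σ : Equiv.Perm (Fin n)) : Prop :=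
  ∃ m : Fin n, (∀ i j : Fin n, i ≤ j → j ≤ m → σ j ≤ σ i) ∧
    (∀ i j : Fin n, m ≤ i → i ≤ j → σ i ≤ σ j)

/-- Cyclic unimodal permutations. -/
def CUPperm (σ : Equiv.Perm (Fin n)) : Prop := IsCyclicPerm σ ∧ IsUnimodal σ

/-- The string `A(σ)` obtained from the itinerary of `σ` (`+ ↦ 0`, `− ↦ 1`),
with the last digit chosen so that the total number of 1's is even.
(Here `m = σ⁻¹ 0` is the unique element with `σ m` least.) -/
def Astr [NeZero n] (σ : Equiv.Perm (Fin n)) : Fin n → Bool :=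
  fun i =>
    if i.val + 1 < n then decide ((σ ^ (i.val + 1)) (σ⁻¹ 0) < σ⁻¹ 0)
    else decide (Odd ((univ.filter (fun j : Fin n =>
      j.val + 1 < n ∧ (σ ^ (j.val + 1)) (σ⁻¹ 0) < σ⁻¹ 0)).card))

/-- The string used for `Ψ(σ)`: itinerary digits with the last digit chosen
so that the total number of 1's is odd. -/
def BstrOdd [NeZero n] (σ : Equiv.Perm (Fin n)) : Fin n → Bool :=
  fun i =>
    if i.val + 1 < n then decide ((σ ^ (i.val + 1)) (σ⁻¹ 0) < σ⁻¹ 0)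
    else !(decide (Odd ((univ.filter (fun j : Fin n =>
      j.val + 1 < n ∧ (σ ^ (j.val + 1)) (σ⁻¹ 0) < σ⁻¹ 0)).card)))

/-- The itinerary of a cyclic unimodal permutation: `none` encodes `⋆` (position `n`),
`some true` encodes `−` (i.e. `σⁱ(m) < m`), `some false` encodes `+` (i.e. `σⁱ(m) > m`). -/
def itin [NeZero n] (σ : Equiv.Perm (Fin n)) : Fin n → Option Bool :=
  fun i =>
    if i.val + 1 = n then none
    else some (decide ((σ ^ (i.val + 1)) (σ⁻¹ 0) < σ⁻¹ 0))

/-- `σ` arises from the class `C` by the construction defining `λ`: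
for some representative `t` of `C` beginning with `1`, `σ` is the cyclic permutation
built from the lexicographic ranks of the iterates of `t` under `F` (non-reflexive case)
or of `t^−` under `F̃` (reflexive case). -/
def LamRel [NeZero n] (C : Set (Fin n → Bool)) (σ : Equiv.Perm (Fin n)) : Prop :=
  ∃ t : Fin n → Bool, t 0 = true ∧ C = invClass t ∧
    ((¬ ReflexiveStr t ∧ BuiltFrom strLt (fun i : Fin n => twistF^[i.val] t) σ) ∨
     (ReflexiveStr t ∧ BuiltFrom extLt (fun i : Fin n => extF^[i.val] (t, false)) σ))

/-- `σ` arises from the representative `s` by the Weiss–Rogers construction `Φ`: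
`σ` is the cyclic permutation built from the lexicographic ranks of
`νᵢ = ι(Ξ(L^{i-1}(s)))`. -/
def PhiBuilt (s : Fin n → Bool) (σ : Equiv.Perm (Fin n)) : Prop :=
  BuiltFrom strLt (fun i : Fin n => inv (xi (shiftL^[i.val] s))) σ

end Necklaces

namespace Necklaces

variable {n : ℕ}

theorem shiftL_iterate (s : Fin n → Bool) (k : ℕ) (i : Fin n) :
    (shiftL^[k] s) i = s ⟨(i.val + k) % n, Nat.mod_lt _ i.pos⟩ := by
  induction k generalizing s with
  | zero => simp [Nat.mod_eq_of_lt i.isLt]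
  | succ k ih =>
    rw [Function.iterate_succ_apply, ih]
    show s _ = s _
    congr 1
    apply Fin.ext
    show ((i.val + k) % n + 1) % n = (i.val + (k+1)) % n
    rw [Nat.mod_add_mod]
    ring_nf

theorem shiftL_n (s : Fin n → Bool) : shiftL^[n] s = s := by
  funext i
  rw [shiftL_iterate]
  congr 1
  apply Fin.ext
  show (i.val + n) % n = i.val
  rw [Nat.add_mod_right, Nat.mod_eq_of_lt i.isLt]

theorem inv_invol (s : Fin n → Bool) : inv (inv s) = s := by
  funext i; simp [inv]

theorem shiftL_inv (s : Fin n → Bool) : shiftL (inv s) = inv (shiftL s) := rfl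

theorem shiftL_iterate_inv (s : Fin n → Bool) (k : ℕ) :
    shiftL^[k] (inv s) = inv (shiftL^[k] s) := by
  induction k with
  | zero => rfl
  | succ k ih => rw [Function.iterate_succ_apply', ih, shiftL_inv,
      Function.iterate_succ_apply']


theorem strLt_irrefl (u : Fin n → Bool) : ¬ strLt u u := by
  rintro ⟨i, -, h⟩; exact lt_irrefl _ h

theorem strLt_asymm {u v : Fin n → Bool} (h : strLt u v) : ¬ strLt v u := by
  rintro ⟨i', ha', hb'⟩
  obtain ⟨i, ha, hb⟩ := h
  rcases lt_trichotomy i i' with hlt | heq | hgt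
  · rw [ha' i hlt] at hb; exact lt_irrefl _ hb
  · subst heq; exact absurd (hb.trans hb') (lt_irrefl _)
  · rw [ha i' hgt] at hb'; exact lt_irrefl _ hb'

theorem strLt_trans {u v w : Fin n → Bool} (h1 : strLt u v) (h2 : strLt v w) :
    strLt u w := by
  obtain ⟨i, ha, hb⟩ := h1
  obtain ⟨i', ha', hb'⟩ := h2
  rcases lt_trichotomy i i' with hlt | heq | hgt
  · exact ⟨i, fun j hj => (ha j hj).trans (ha' j (hj.trans hlt)), by
      rw [← ha' i hlt]; exact hb⟩
  · subst heq
    rcases Bool.lt_iff.mp hb with ⟨-, hv⟩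
    rcases Bool.lt_iff.mp hb' with ⟨hv', -⟩
    rw [hv] at hv'; exact absurd hv' (by simp)
  · exact ⟨i', fun j hj => (ha j (hj.trans hgt)).trans (ha' j hj), by
      rw [ha i' hgt]; exact hb'⟩

theorem strLt_total {u v : Fin n → Bool} (h : u ≠ v) : strLt u v ∨ strLt v u := by
  have hne : (univ.filter (fun i => u i ≠ v i)).Nonempty := by
    by_contra hc
    rw [Finset.not_nonempty_iff_eq_empty, Finset.filter_eq_empty_iff] at hc
    exact h (funext fun i => not_not.mp (hc (mem_univ i)))
  set i0 := (univ.filter (fun i => u i ≠ v i)).min' hne with hi0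
  have hmem : u i0 ≠ v i0 := by
    have := Finset.min'_mem _ hne
    rw [Finset.mem_filter] at this; exact this.2
  have hagree : ∀ j : Fin n, j < i0 → u j = v j := by
    intro j hj
    by_contra hc
    have : i0 ≤ j := Finset.min'_le _ _ (by simp [hc])
    exact absurd hj (not_lt.mpr this)
  rcases Bool.eq_false_or_eq_true (u i0) with hu | hu
  · right
    refine ⟨i0, fun j hj => (hagree j hj).symm, ?_⟩
    rw [Bool.lt_iff]
    refine ⟨?_, hu⟩
    cases hv : v i0
    · rfl
    · exact absurd (hu.trans hv.symm) hmem
  · left; exact ⟨i0, hagree, by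
      rw [Bool.lt_iff]
      refine ⟨hu, ?_⟩
      cases hv : v i0
      · exact absurd (hu.trans hv.symm) hmem
      · rfl⟩


section Pos
variable [NeZero n]

theorem npos : 0 < n := Nat.pos_of_ne_zero (NeZero.ne n)

theorem mk_zero_eq : (⟨0, npos⟩ : Fin n) = 0 := by
  apply Fin.ext; simp [Fin.val_zero]

theorem twistF_def (s : Fin n → Bool) :
    twistF s = if shiftL s ⟨0, npos⟩ = true then shiftL s else inv (shiftL s) := by
  rw [twistF, dif_pos npos]

theorem twistF_head (s : Fin n → Bool) : twistF s 0 = true := by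
  rw [twistF_def, ← mk_zero_eq]
  by_cases h : shiftL s ⟨0, npos⟩ = true
  · rw [if_pos h]; exact h
  · rw [if_neg h]
    have hf : shiftL s ⟨0, npos⟩ = false := by
      cases hx : shiftL s ⟨0, npos⟩
      · rfl
      · exact absurd hx h
    show (!(shiftL s ⟨0, npos⟩)) = true
    rw [hf]
    rfl

theorem twistF_or (s : Fin n → Bool) :
    twistF s = shiftL s ∨ twistF s = inv (shiftL s) := by
  rw [twistF_def]; split
  · exact Or.inl rfl
  · exact Or.inr rfl

theorem twistF_eq_shift {s : Fin n → Bool} (h : shiftL s 0 = true) :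
    twistF s = shiftL s := by
  rw [twistF_def, if_pos (by rw [mk_zero_eq]; exact h)]

theorem twistF_eq_inv {s : Fin n → Bool} (h : shiftL s 0 = false) :
    twistF s = inv (shiftL s) := by
  rw [twistF_def, if_neg (by rw [mk_zero_eq]; simp [h])]

theorem shiftL_zero (s : Fin n → Bool) (h2 : 1 < n) :
    shiftL s 0 = s ⟨1, h2⟩ := by
  show s _ = s _
  congr 1
  apply Fin.ext
  show ((0:Fin n).val + 1) % n = 1
  simp [Nat.mod_eq_of_lt h2]

theorem shiftL_last (s : Fin n → Bool) :
    shiftL s ⟨n - 1, Nat.sub_lt npos Nat.one_pos⟩ = s 0 := by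
  show s _ = s _
  congr 1
  apply Fin.ext
  show (n - 1 + 1) % n = (0 : Fin n).val
  rw [Nat.sub_add_cancel npos, Nat.mod_self]
  simp

variable {t : Fin n → Bool} (h1 : t 0 = true)
include h1

theorem orbit_head : ∀ k, (twistF^[k] t) 0 = true := by
  intro k
  cases k with
  | zero => exact h1
  | succ k => rw [Function.iterate_succ_apply']; exact twistF_head _

omit h1 in
theorem orbit_rep : ∀ k, twistF^[k] t = shiftL^[k] t ∨ twistF^[k] t = inv (shiftL^[k] t) := by
  intro k
  induction k with
  | zero => exact Or.inl rfl
  | succ k ih =>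
    rw [Function.iterate_succ_apply', Function.iterate_succ_apply']
    have hc : shiftL (inv (shiftL^[k] t)) = inv (shiftL (shiftL^[k] t)) := rfl
    rcases ih with h | h
    · rw [h]; exact twistF_or _
    · rw [h]
      rcases twistF_or (inv (shiftL^[k] t)) with h' | h'
      · rw [h', hc]; exact Or.inr rfl
      · rw [h', hc]
        left
        funext i
        simp [inv]

theorem twistF_period : twistF^[n] t = t := by
  rcases orbit_rep (t := t) n with h | h
  · rw [h, shiftL_n]
  · exfalso
    have h0 := orbit_head h1 n
    rw [h] at h0
    rw [shiftL_n] at h0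
    have h0' : (!(t 0)) = true := h0
    rw [h1] at h0'
    exact absurd h0' (by simp)

theorem orbit_step (a : Fin n) :
    twistF^[(finSucc a).val] t = twistF (twistF^[a.val] t) := by
  rcases Nat.lt_or_ge (a.val + 1) n with hl | hg
  · have hv : (finSucc a).val = a.val + 1 := Nat.mod_eq_of_lt hl
    rw [hv, Function.iterate_succ_apply']
  · have he : a.val + 1 = n := le_antisymm (Nat.succ_le_of_lt a.isLt) hg
    have hv : (finSucc a).val = 0 := by show (a.val + 1) % n = 0; rw [he, Nat.mod_self]
    rw [hv]
    show t = _
    have h2 : twistF (twistF^[a.val] t) = twistF^[a.val + 1] t :=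
      (Function.iterate_succ_apply' twistF a.val t).symm
    rw [h2, he, twistF_period h1]

/-- Undo the inversion flag. -/
def flipStr (p : (Fin n → Bool) × Bool) : Fin n → Bool := if p.2 then inv p.1 else p.1

omit h1 in
theorem extF_fst (p : (Fin n → Bool) × Bool) : (extF p).1 = twistF p.1 := by
  rw [extF, dif_pos npos]
  split <;> rfl

omit h1 in
theorem extF_conj {p : (Fin n → Bool) × Bool} (hp : p.1 0 = true) :
    flipStr (extF p) = shiftL (flipStr p) := by
  obtain ⟨s, b⟩ := p
  have hp' : s 0 = true := hp
  have hlast : shiftL s ⟨n - 1, Nat.sub_lt npos Nat.one_pos⟩ = true := by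
    rw [shiftL_last]; exact hp'
  rcases Bool.eq_false_or_eq_true (shiftL s ⟨0, npos⟩) with hs | hs
  · have ht : twistF s = shiftL s := by rw [twistF_def, if_pos hs]
    have hcond : twistF (s, b).1 ⟨n - 1, Nat.sub_lt npos Nat.one_pos⟩ = true := by
      show twistF s _ = true
      rw [ht]; exact hlast
    rw [extF, dif_pos npos, if_pos hcond]
    show flipStr (twistF s, b) = _
    rw [ht]
    cases b <;> rfl
  · have ht : twistF s = inv (shiftL s) := by
      rw [twistF_def, if_neg (by rw [hs]; simp)]
    have hcond : twistF (s, b).1 ⟨n - 1, Nat.sub_lt npos Nat.one_pos⟩ = false := by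
      show twistF s _ = false
      rw [ht]
      show (!(shiftL s ⟨n - 1, Nat.sub_lt npos Nat.one_pos⟩)) = false
      rw [hlast]
      rfl
    rw [extF, dif_pos npos, if_neg (by rw [hcond]; simp)]
    show flipStr (twistF s, !b) = _
    rw [ht]
    cases b
    · show inv (inv (shiftL s)) = shiftL s
      funext i; simp [inv]
    · rfl

omit h1 in
theorem extF_fst_iter (p : (Fin n → Bool) × Bool) :
    ∀ k, (extF^[k] p).1 = twistF^[k] p.1 := by
  intro k
  induction k with
  | zero => rfl
  | succ k ih =>
    rw [Function.iterate_succ_apply', Function.iterate_succ_apply', extF_fst, ih]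

theorem orbit_head_ext : ∀ k, (extF^[k] (t, false)).1 0 = true := by
  intro k
  rw [extF_fst_iter]
  exact orbit_head h1 k

theorem extOrbit_conj : ∀ k, flipStr (extF^[k] (t, false)) = shiftL^[k] t := by
  intro k
  induction k with
  | zero => rfl
  | succ k ih =>
    rw [Function.iterate_succ_apply', Function.iterate_succ_apply']
    rw [extF_conj (orbit_head_ext h1 k), ih]

theorem extF_period : extF^[n] (t, false) = (t, false) := by
  have h2 := extOrbit_conj h1 n
  have hf := extF_fst_iter (t, false) n
  rw [twistF_period h1] at hf
  rw [shiftL_n] at h2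
  set q := extF^[n] (t, false) with hq
  rcases Bool.eq_false_or_eq_true q.2 with hb | hb
  · have : flipStr q = inv q.1 := by rw [flipStr, if_pos hb]
    rw [this, hf] at h2
    exfalso
    have h3 : (!(t 0)) = t 0 := congrFun h2 0
    rw [h1] at h3
    exact absurd h3 (by simp)
  · have hpair : q = (q.1, q.2) := rfl
    rw [hpair, hf, hb]

theorem extOrbit_step (a : Fin n) :
    extF^[(finSucc a).val] (t, false) = extF (extF^[a.val] (t, false)) := by
  rcases Nat.lt_or_ge (a.val + 1) n with hl | hg
  · have hv : (finSucc a).val = a.val + 1 := Nat.mod_eq_of_lt hl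
    rw [hv, Function.iterate_succ_apply']
  · have he : a.val + 1 = n := le_antisymm (Nat.succ_le_of_lt a.isLt) hg
    have hv : (finSucc a).val = 0 := by show (a.val + 1) % n = 0; rw [he, Nat.mod_self]
    rw [hv]
    show (t, false) = _
    have h2 : extF (extF^[a.val] (t, false)) = extF^[a.val + 1] (t, false) :=
      (Function.iterate_succ_apply' extF a.val (t, false)).symm
    rw [h2, he, extF_period h1]

end Pos

section Rank
variable {X : Type*} {lt : X → X → Prop} {μ : Fin n → X}
variable (hinj : Function.Injective μ)
  (htri : ∀ a b : Fin n, a ≠ b → lt (μ a) (μ b) ∨ lt (μ b) (μ a))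
  (hasym : ∀ a b : Fin n, lt (μ a) (μ b) → ¬ lt (μ b) (μ a))
  (htrans : ∀ a b c : Fin n, lt (μ a) (μ b) → lt (μ b) (μ c) → lt (μ a) (μ c))

open scoped Classical

include hasym in
theorem rankOf_lt_n (i : Fin n) : rankOf lt μ i < n := by
  classical
  have hsub : (univ.filter (fun j => lt (μ j) (μ i))) ⊆ univ.erase i := by
    intro j hj
    rw [Finset.mem_filter] at hj
    rw [Finset.mem_erase]
    refine ⟨?_, mem_univ _⟩
    rintro rfl
    exact hasym j j hj.2 hj.2
  calc rankOf lt μ i ≤ (univ.erase i).card := by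
        rw [rankOf]
        exact Finset.card_le_card (by
          intro j hj
          apply hsub
          simpa using hj)
      _ = n - 1 := by rw [Finset.card_erase_of_mem (mem_univ _), Finset.card_univ,
          Fintype.card_fin]
      _ < n := Nat.sub_lt i.pos Nat.one_pos

include hasym htrans in
theorem rankOf_mono {a b : Fin n} (h : lt (μ a) (μ b)) :
    rankOf lt μ a < rankOf lt μ b := by
  classical
  rw [rankOf, rankOf]
  apply Finset.card_lt_card
  constructor
  · intro j hj
    simp only [Finset.mem_filter, mem_univ, true_and] at hj ⊢
    exact htrans j a b hj h
  · intro hcon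
    have ha : a ∈ univ.filter (fun j => lt (μ j) (μ b)) := by
      simp only [Finset.mem_filter, mem_univ, true_and]
      exact h
    have := hcon ha
    simp only [Finset.mem_filter, mem_univ, true_and] at this
    exact hasym a a this this

include htri hasym htrans in
theorem rankOf_iff {a b : Fin n} :
    rankOf lt μ a < rankOf lt μ b ↔ lt (μ a) (μ b) := by
  constructor
  · intro h
    by_contra hc
    rcases eq_or_ne a b with rfl | hne
    · exact lt_irrefl _ h
    · rcases htri a b hne with h' | h'
      · exact hc h'
      · exact absurd h (not_lt.mpr (le_of_lt (rankOf_mono hasym htrans h')))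
  · exact rankOf_mono hasym htrans

include htri hasym htrans in
theorem rankOf_inj {a b : Fin n} (h : rankOf lt μ a = rankOf lt μ b) : a = b := by
  by_contra hne
  rcases htri a b hne with h' | h'
  · exact absurd h (Nat.ne_of_lt (rankOf_mono hasym htrans h'))
  · exact absurd h.symm (Nat.ne_of_lt (rankOf_mono hasym htrans h'))

/-- The rank map as a function `Fin n → Fin n`. -/
noncomputable def rankFin (hasym : ∀ a b : Fin n, lt (μ a) (μ b) → ¬ lt (μ b) (μ a))
    (i : Fin n) : Fin n := ⟨rankOf lt μ i, rankOf_lt_n hasym i⟩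

include htri hasym htrans in
theorem rankFin_bij : Function.Bijective (rankFin (μ := μ) hasym) := by
  have hi : Function.Injective (rankFin (μ := μ) hasym) := by
    intro a b hab
    exact rankOf_inj htri hasym htrans (congrArg Fin.val hab)
  exact ⟨hi, Finite.surjective_of_injective hi⟩

include htri hasym htrans in
theorem built_step {σ : Equiv.Perm (Fin n)} (hσ : BuiltFrom lt μ σ) (a : Fin n) :
    σ (rankFin (μ := μ) hasym a) = rankFin (μ := μ) hasym (finSucc a) := by
  apply Fin.ext
  exact hσ a (rankFin hasym a) rfl

theorem finSucc_iter_val (k : ℕ) (a : Fin n) :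
    (finSucc^[k] a).val = (a.val + k) % n := by
  induction k with
  | zero => simp [Nat.mod_eq_of_lt a.isLt]
  | succ k ih =>
    rw [Function.iterate_succ_apply']
    show ((finSucc^[k] a).val + 1) % n = _
    rw [ih, Nat.mod_add_mod]
    ring_nf

include htri hasym htrans in
theorem built_pow {σ : Equiv.Perm (Fin n)} (hσ : BuiltFrom lt μ σ) (k : ℕ) (a : Fin n) :
    (σ ^ k) (rankFin (μ := μ) hasym a) = rankFin (μ := μ) hasym (finSucc^[k] a) := by
  induction k generalizing a with
  | zero => rfl
  | succ k ih =>
    rw [pow_succ, Equiv.Perm.mul_apply, built_step htri hasym htrans hσ a, ih,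
      ← Function.iterate_succ_apply]

include htri hasym htrans in
theorem built_cyclic {σ : Equiv.Perm (Fin n)} (hσ : BuiltFrom lt μ σ) :
    IsCyclicPerm σ := by
  intro x y
  obtain ⟨a, ha⟩ := (rankFin_bij htri hasym htrans).2 x
  obtain ⟨b, hb⟩ := (rankFin_bij htri hasym htrans).2 y
  refine ⟨b.val + (n - a.val), ?_⟩
  rw [← ha, ← hb, built_pow htri hasym htrans hσ]
  congr 1
  apply Fin.ext
  rw [finSucc_iter_val]
  have h2 : a.val + (b.val + (n - a.val)) = b.val + n := by
    have := a.isLt.le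
    omega
  rw [h2, Nat.add_mod_right, Nat.mod_eq_of_lt b.isLt]

include htri hasym htrans in
theorem built_unimodal {σ : Equiv.Perm (Fin n)} (hσ : BuiltFrom lt μ σ)
    (hn : 0 < n) (P : X → Prop)
    (H1 : ∀ a b : Fin n, lt (μ a) (μ b) → P (μ a) → P (μ b))
    (H2 : ∀ a b : Fin n, lt (μ a) (μ b) → P (μ a) → lt (μ (finSucc a)) (μ (finSucc b)))
    (H3 : ∀ a b : Fin n, lt (μ a) (μ b) → ¬ P (μ b) → lt (μ (finSucc b)) (μ (finSucc a))) :
    IsUnimodal σ := by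
  clear H1
  set m := σ.symm ⟨0, hn⟩ with hm
  have hσm : σ m = ⟨0, hn⟩ := Equiv.apply_symm_apply σ _
  obtain ⟨c, hc⟩ := (rankFin_bij htri hasym htrans).2 m
  have key : ∀ a b : Fin n, (rankFin (μ := μ) hasym) a < (rankFin (μ := μ) hasym) b → lt (μ a) (μ b) := by
    intro a b h
    exact (rankOf_iff htri hasym htrans).mp h
  have keystep : ∀ a : Fin n, σ ((rankFin (μ := μ) hasym) a) = (rankFin (μ := μ) hasym) (finSucc a) :=
    built_step htri hasym htrans hσ
  refine ⟨m, ?_, ?_⟩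
  · intro i j hij hjm
    rcases eq_or_lt_of_le hij with rfl | hlt
    · exact le_refl _
    obtain ⟨a, ha⟩ := (rankFin_bij htri hasym htrans).2 i
    obtain ⟨b, hb⟩ := (rankFin_bij htri hasym htrans).2 j
    have hab : lt (μ a) (μ b) := key a b (by rw [ha, hb]; exact hlt)
    by_cases hP : P (μ b)
    · rcases eq_or_lt_of_le hjm with rfl | hltm
      · rw [hσm]
        exact Fin.mk_le_of_le_val (Nat.zero_le _)
      · exfalso
        have hbc : lt (μ b) (μ c) := key b c (by rw [hb, hc]; exact hltm)
        have := H2 b c hbc hP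
        have hrk : (rankFin (μ := μ) hasym) (finSucc b) < (rankFin (μ := μ) hasym) (finSucc c) := by
          exact Fin.mk_lt_mk.mpr (rankOf_mono hasym htrans this)
        rw [← keystep, ← keystep, hb, hc, hσm] at hrk
        exact Nat.not_lt_zero _ hrk
    · have := H3 a b hab hP
      have hrk : (rankFin (μ := μ) hasym) (finSucc b) < (rankFin (μ := μ) hasym) (finSucc a) := by
        exact Fin.mk_lt_mk.mpr (rankOf_mono hasym htrans this)
      rw [← keystep, ← keystep, ha, hb] at hrk
      exact le_of_lt hrk
  · intro i j hmi hij
    rcases eq_or_lt_of_le hij with rfl | hlt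
    · exact le_refl _
    obtain ⟨a, ha⟩ := (rankFin_bij htri hasym htrans).2 i
    obtain ⟨b, hb⟩ := (rankFin_bij htri hasym htrans).2 j
    have hab : lt (μ a) (μ b) := key a b (by rw [ha, hb]; exact hlt)
    by_cases hP : P (μ a)
    · have := H2 a b hab hP
      have hrk : (rankFin (μ := μ) hasym) (finSucc a) < (rankFin (μ := μ) hasym) (finSucc b) := by
        exact Fin.mk_lt_mk.mpr (rankOf_mono hasym htrans this)
      rw [← keystep, ← keystep, ha, hb] at hrk
      exact le_of_lt hrk
    · rcases eq_or_lt_of_le hmi with heq | hltm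
      · rw [← heq, hσm]
        exact Fin.mk_le_of_le_val (Nat.zero_le _)
      · exfalso
        have hca : lt (μ c) (μ a) := key c a (by rw [ha, hc]; exact hltm)
        have := H3 c a hca hP
        have hrk : (rankFin (μ := μ) hasym) (finSucc a) < (rankFin (μ := μ) hasym) (finSucc c) := by
          exact Fin.mk_lt_mk.mpr (rankOf_mono hasym htrans this)
        rw [← keystep, ← keystep, ha, hc, hσm] at hrk
        exact Nat.not_lt_zero _ hrk

end Rank

section Main
variable [NeZero n]

theorem strLt_digit1 {u v : Fin n → Bool} (h2 : 1 < n) (h01 : u 0 = v 0)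
    (h : strLt u v) (hu1 : u ⟨1, h2⟩ = true) : v ⟨1, h2⟩ = true := by
  obtain ⟨i, hag, hlt⟩ := h
  rcases lt_trichotomy i ⟨1, h2⟩ with hi | hi | hi
  · exfalso
    have hi0 : i = 0 := by
      apply Fin.ext
      have hv : i.val < 1 := hi
      simp
      have h0 : (0 : Fin n).val = 0 := by rw [← mk_zero_eq]
      omega
    rw [hi0, h01] at hlt
    exact lt_irrefl _ hlt
  · rw [← hi]
    exact (Bool.lt_iff.mp hlt).2
  · rw [← hag ⟨1, h2⟩ hi]
    exact hu1

theorem strLt_shift_core {u v : Fin n → Bool} (h2 : 1 < n) (h01 : u 0 = v 0)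
    (h11 : u ⟨1, h2⟩ = v ⟨1, h2⟩) (h : strLt u v) :
    strLt (shiftL u) (shiftL v) ∧ strLt (inv (shiftL v)) (inv (shiftL u)) := by
  obtain ⟨i, hag, hlt⟩ := h
  have hne : u i ≠ v i := ne_of_lt hlt
  have hi0 : i.val ≠ 0 := by
    intro hc
    apply hne
    have hi : i = 0 := Fin.ext (by simpa using hc)
    rw [hi]; exact h01
  have hi1 : i.val ≠ 1 := by
    intro hc
    apply hne
    have hi : i = ⟨1, h2⟩ := Fin.ext hc
    rw [hi]; exact h11
  have h2i : 2 ≤ i.val := by omega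
  have hisub : i.val - 1 < n := by have := i.isLt; omega
  set i' : Fin n := ⟨i.val - 1, hisub⟩ with hi'
  have hieq : ∀ w : Fin n → Bool, shiftL w i' = w i := by
    intro w
    show w _ = w _
    congr 1
    apply Fin.ext
    show (i.val - 1 + 1) % n = i.val
    rw [Nat.sub_add_cancel (by omega), Nat.mod_eq_of_lt i.isLt]
  have hjeq : ∀ j : Fin n, ∀ hj : j < i', ∀ w : Fin n → Bool,
      shiftL w j = w ⟨j.val + 1, by have hj2 : j.val < i.val - 1 := hj; have := i.isLt; omega⟩ := by
    intro j hj w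
    show w _ = w _
    congr 1
    apply Fin.ext
    show (j.val + 1) % n = j.val + 1
    have hjv : j.val < i.val - 1 := hj
    have := i.isLt
    exact Nat.mod_eq_of_lt (by omega)
  have hltv : (⟨1, h2⟩ : Fin n) ≤ i := by
    show 1 ≤ i.val; omega
  have hagree : ∀ j : Fin n, j < i' → shiftL u j = shiftL v j := by
    intro j hj
    rw [hjeq j hj, hjeq j hj]
    apply hag
    show j.val + 1 < i.val
    have hjv : j.val < i.val - 1 := hj
    omega
  have hboolu : u i = false := (Bool.lt_iff.mp hlt).1
  have hboolv : v i = true := (Bool.lt_iff.mp hlt).2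
  constructor
  · refine ⟨i', hagree, ?_⟩
    rw [hieq u, hieq v]
    exact hlt
  · refine ⟨i', ?_, ?_⟩
    · intro j hj
      show (!(shiftL v j)) = (!(shiftL u j))
      rw [hagree j hj]
    · show (!(shiftL v i')) < (!(shiftL u i'))
      rw [hieq u, hieq v, hboolu, hboolv]
      exact Bool.lt_iff.mpr ⟨rfl, rfl⟩

theorem twistF_mono (h2 : 1 < n) {u v : Fin n → Bool} (hu0 : u 0 = true)
    (hv0 : v 0 = true) (hu1 : u ⟨1, h2⟩ = true) (h : strLt u v) :
    strLt (twistF u) (twistF v) := by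
  have hv1 := strLt_digit1 h2 (hu0.trans hv0.symm) h hu1
  rw [twistF_eq_shift (by rw [shiftL_zero u h2]; exact hu1),
      twistF_eq_shift (by rw [shiftL_zero v h2]; exact hv1)]
  exact (strLt_shift_core h2 (hu0.trans hv0.symm) (hu1.trans hv1.symm) h).1

theorem twistF_anti (h2 : 1 < n) {u v : Fin n → Bool} (hu0 : u 0 = true)
    (hv0 : v 0 = true) (hv1 : v ⟨1, h2⟩ = false) (h : strLt u v) :
    strLt (twistF v) (twistF u) := by
  have hu1 : u ⟨1, h2⟩ = false := by
    cases hx : u ⟨1, h2⟩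
    · rfl
    · have := strLt_digit1 h2 (hu0.trans hv0.symm) h hx
      rw [hv1] at this
      exact absurd this (by simp)
  rw [twistF_eq_inv (by rw [shiftL_zero v h2]; exact hv1),
      twistF_eq_inv (by rw [shiftL_zero u h2]; exact hu1)]
  exact (strLt_shift_core h2 (hu0.trans hv0.symm) (hu1.trans hv1.symm) h).2

theorem extF_eq_pos (h2 : 1 < n) {s : Fin n → Bool} {b : Bool} (hs0 : s 0 = true)
    (hs1 : s ⟨1, h2⟩ = true) : extF (s, b) = (shiftL s, b) := by
  have ht : twistF s = shiftL s := twistF_eq_shift (by rw [shiftL_zero s h2]; exact hs1)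
  rw [extF, dif_pos npos, if_pos (by
    show twistF s _ = true
    rw [ht, shiftL_last]
    exact hs0)]
  rw [ht]

theorem extF_eq_neg (h2 : 1 < n) {s : Fin n → Bool} {b : Bool} (hs0 : s 0 = true)
    (hs1 : s ⟨1, h2⟩ = false) : extF (s, b) = (inv (shiftL s), !b) := by
  have ht : twistF s = inv (shiftL s) := twistF_eq_inv (by rw [shiftL_zero s h2]; exact hs1)
  rw [extF, dif_pos npos, if_neg (by
    show ¬ (twistF s _ = true)
    rw [ht]
    show ¬ ((!(shiftL s ⟨n - 1, Nat.sub_lt npos Nat.one_pos⟩)) = true)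
    rw [shiftL_last, hs0]
    simp)]
  rw [ht]

omit [NeZero n] in
theorem extLt_asymm {p q : (Fin n → Bool) × Bool} (h : extLt p q) : ¬ extLt q p := by
  rintro (h' | ⟨he', hb'⟩)
  · rcases h with h | ⟨he, hb⟩
    · exact strLt_asymm h h'
    · rw [he] at h'; exact strLt_irrefl _ h'
  · rcases h with h | ⟨he, hb⟩
    · rw [he'] at h; exact strLt_irrefl _ h
    · exact lt_asymm hb hb'

omit [NeZero n] in
theorem extLt_trans {p q r : (Fin n → Bool) × Bool} (h : extLt p q) (h' : extLt q r) :
    extLt p r := by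
  rcases h with h | ⟨he, hb⟩ <;> rcases h' with h' | ⟨he', hb'⟩
  · exact Or.inl (strLt_trans h h')
  · rw [he'] at h; exact Or.inl h
  · refine Or.inl ?_
    rw [he]
    exact h'
  · exact Or.inr ⟨he.trans he', lt_trans hb hb'⟩

omit [NeZero n] in
theorem extLt_total {p q : (Fin n → Bool) × Bool} (h : p ≠ q) :
    extLt p q ∨ extLt q p := by
  rcases eq_or_ne p.1 q.1 with he | hne
  · have hb : p.2 ≠ q.2 := by
      intro hc
      exact h (Prod.ext he hc)
    rcases Bool.eq_false_or_eq_true p.2 with hp | hp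
    · right
      refine Or.inr ⟨he.symm, ?_⟩
      have hq : q.2 = false := by
        cases hq : q.2
        · rfl
        · rw [hp, hq] at hb; exact absurd rfl hb
      rw [hp, hq]
      exact Bool.lt_iff.mpr ⟨rfl, rfl⟩
    · left
      refine Or.inr ⟨he, ?_⟩
      have hq : q.2 = true := by
        cases hq : q.2
        · rw [hp, hq] at hb; exact absurd rfl hb
        · rfl
      rw [hp, hq]
      exact Bool.lt_iff.mpr ⟨rfl, rfl⟩
  · rcases strLt_total hne with h' | h'
    · exact Or.inl (Or.inl h')
    · exact Or.inr (Or.inl h')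

theorem extF_mono (h2 : 1 < n) {p q : (Fin n → Bool) × Bool} (hp0 : p.1 0 = true)
    (hq0 : q.1 0 = true) (hp1 : p.1 ⟨1, h2⟩ = true) (h : extLt p q) :
    extLt (extF p) (extF q) := by
  obtain ⟨s, b⟩ := p
  obtain ⟨s', b'⟩ := q
  rcases h with h | ⟨he, hb⟩
  · have hq1 : s' ⟨1, h2⟩ = true := strLt_digit1 h2 (hp0.trans hq0.symm) h hp1
    rw [extF_eq_pos h2 hp0 hp1, extF_eq_pos h2 hq0 hq1]
    exact Or.inl (strLt_shift_core h2 (hp0.trans hq0.symm) (hp1.trans hq1.symm) h).1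
  · have he' : s = s' := he
    subst he'
    rw [extF_eq_pos h2 hp0 hp1, extF_eq_pos h2 hp0 hp1]
    exact Or.inr ⟨rfl, hb⟩

theorem extF_anti (h2 : 1 < n) {p q : (Fin n → Bool) × Bool} (hp0 : p.1 0 = true)
    (hq0 : q.1 0 = true) (hq1 : q.1 ⟨1, h2⟩ = false) (h : extLt p q) :
    extLt (extF q) (extF p) := by
  obtain ⟨s, b⟩ := p
  obtain ⟨s', b'⟩ := q
  rcases h with h | ⟨he, hb⟩
  · have hp1 : s ⟨1, h2⟩ = false := by
      cases hx : s ⟨1, h2⟩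
      · rfl
      · have := strLt_digit1 h2 (hp0.trans hq0.symm) h hx
        rw [hq1] at this
        exact absurd this (by simp)
    rw [extF_eq_neg h2 hp0 hp1, extF_eq_neg h2 hq0 hq1]
    exact Or.inl (strLt_shift_core h2 (hp0.trans hq0.symm) (hp1.trans hq1.symm) h).2
  · have he' : s = s' := he
    subst he'
    rw [extF_eq_neg h2 hp0 hq1, extF_eq_neg h2 hp0 hq1]
    refine Or.inr ⟨rfl, ?_⟩
    have hbb : b = false ∧ b' = true := Bool.lt_iff.mp hb
    rw [hbb.1, hbb.2]
    exact Bool.lt_iff.mpr ⟨rfl, rfl⟩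

theorem prim_shift_inj {t : Fin n → Bool} (hprim : Primitive t) {a b : ℕ}
    (ha : a < n) (hb : b < n) (h : shiftL^[a] t = shiftL^[b] t) : a = b := by
  rcases lt_trichotomy a b with hl | he | hl
  · exfalso
    have h2 := congrArg (shiftL^[n - b]) h
    rw [← Function.iterate_add_apply, ← Function.iterate_add_apply] at h2
    have he2 : n - b + b = n := by omega
    rw [he2, shiftL_n] at h2
    exact hprim (n - b + a) (by omega) (by omega) h2
  · exact he
  · exfalso
    have h2 := congrArg (shiftL^[n - a]) h
    rw [← Function.iterate_add_apply, ← Function.iterate_add_apply] at h2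
    have he2 : n - a + a = n := by omega
    rw [he2, shiftL_n] at h2
    exact hprim (n - a + b) (by omega) (by omega) h2.symm

omit [NeZero n] in
theorem refl_of_shift_inv {t : Fin n → Bool} {a b : ℕ} (hb : b ≤ n)
    (h : shiftL^[a] t = inv (shiftL^[b] t)) : ReflexiveStr t := by
  have h2 := congrArg (shiftL^[n - b]) h
  rw [← Function.iterate_add_apply, shiftL_iterate_inv,
    ← Function.iterate_add_apply] at h2
  have he2 : n - b + b = n := by omega
  rw [he2, shiftL_n] at h2
  exact ⟨n - b + a, h2⟩

theorem twist_inj {t : Fin n → Bool} (hprim : Primitive t) (h1 : t 0 = true)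
    (hnr : ¬ ReflexiveStr t) :
    Function.Injective (fun i : Fin n => twistF^[i.val] t) := by
  intro a b h
  simp only at h
  rcases orbit_rep (t := t) a.val with ha | ha <;>
    rcases orbit_rep (t := t) b.val with hb | hb <;> rw [ha, hb] at h
  · exact Fin.ext (prim_shift_inj hprim a.isLt b.isLt h)
  · exact absurd (refl_of_shift_inv b.isLt.le h) hnr
  · exact absurd (refl_of_shift_inv a.isLt.le h.symm) hnr
  · have h' := congrArg inv h
    rw [inv_invol, inv_invol] at h'
    exact Fin.ext (prim_shift_inj hprim a.isLt b.isLt h')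

theorem ext_inj {t : Fin n → Bool} (hprim : Primitive t) (h1 : t 0 = true) :
    Function.Injective (fun i : Fin n => extF^[i.val] (t, false)) := by
  intro a b h
  simp only at h
  have h2 := congrArg flipStr h
  rw [extOrbit_conj h1, extOrbit_conj h1] at h2
  exact Fin.ext (prim_shift_inj hprim a.isLt b.isLt h2)

omit [NeZero n] in
theorem CUP_of_one (hn : n = 1) (σ : Equiv.Perm (Fin n)) : CUPperm σ := by
  subst hn
  constructor
  · intro x y
    exact ⟨0, Subsingleton.elim _ _⟩
  · refine ⟨0, ?_, ?_⟩ <;> intro i j _ _ <;>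
      exact le_of_eq (congrArg σ (Subsingleton.elim _ _))

end Main

/-- Let `t ∈ {0,1}ⁿ` be primitive and begin with 1. In the non-reflexive
case set `μᵢ = F^{i−1}(t)`, in the reflexive case set `μᵢ = F̃^{i−1}(t^−)`. Then the `μᵢ`
are pairwise distinct, and the permutation `σ` defined by `σ(rᵢ) = r_{i+1}` (where `rᵢ` is
the lexicographic rank of `μᵢ`) is a cyclic unimodal permutation. -/
theorem built_perm_is_CUP (n : ℕ) [NeZero n] (t : Fin n → Bool)
    (hprim : Primitive t) (h1 : t 0 = true) :
    (¬ ReflexiveStr t →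
      Function.Injective (fun i : Fin n => twistF^[i.val] t) ∧
      ∀ σ : Equiv.Perm (Fin n),
        BuiltFrom strLt (fun i : Fin n => twistF^[i.val] t) σ → CUPperm σ) ∧
    (ReflexiveStr t →
      Function.Injective (fun i : Fin n => extF^[i.val] (t, false)) ∧
      ∀ σ : Equiv.Perm (Fin n),
        BuiltFrom extLt (fun i : Fin n => extF^[i.val] (t, false)) σ → CUPperm σ) := by
  constructor
  · intro hnr
    have hinj : Function.Injective (fun i : Fin n => twistF^[i.val] t) :=
      twist_inj hprim h1 hnr
    refine ⟨hinj, ?_⟩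
    intro σ hσ
    rcases Nat.lt_or_ge 1 n with h2 | hle
    · have htri : ∀ a b : Fin n, a ≠ b →
          strLt (twistF^[a.val] t) (twistF^[b.val] t) ∨
            strLt (twistF^[b.val] t) (twistF^[a.val] t) := by
        intro a b hab
        apply strLt_total
        intro hc
        exact hab (hinj hc)
      have hasym : ∀ a b : Fin n, strLt (twistF^[a.val] t) (twistF^[b.val] t) →
          ¬ strLt (twistF^[b.val] t) (twistF^[a.val] t) := fun a b h => strLt_asymm h
      have htrans : ∀ a b c : Fin n, strLt (twistF^[a.val] t) (twistF^[b.val] t) →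
          strLt (twistF^[b.val] t) (twistF^[c.val] t) →
          strLt (twistF^[a.val] t) (twistF^[c.val] t) :=
        fun a b c h h' => strLt_trans h h'
      refine ⟨built_cyclic htri hasym htrans hσ, ?_⟩
      refine built_unimodal htri hasym htrans hσ npos
        (fun s => s ⟨1, h2⟩ = true) ?_ ?_ ?_
      · intro a b hab hP
        exact strLt_digit1 h2
          ((orbit_head h1 a.val).trans (orbit_head h1 b.val).symm) hab hP
      · intro a b hab hP
        show strLt (twistF^[(finSucc a).val] t) (twistF^[(finSucc b).val] t)
        rw [orbit_step h1 a, orbit_step h1 b]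
        exact twistF_mono h2 (orbit_head h1 a.val) (orbit_head h1 b.val) hP hab
      · intro a b hab hP
        show strLt (twistF^[(finSucc b).val] t) (twistF^[(finSucc a).val] t)
        rw [orbit_step h1 a, orbit_step h1 b]
        refine twistF_anti h2 (orbit_head h1 a.val) (orbit_head h1 b.val) ?_ hab
        cases hx : (twistF^[b.val] t) ⟨1, h2⟩
        · rfl
        · exact absurd hx hP
    · exact CUP_of_one (by have := npos (n := n); omega) σ
  · intro _
    have hinj : Function.Injective (fun i : Fin n => extF^[i.val] (t, false)) :=
      ext_inj hprim h1
    refine ⟨hinj, ?_⟩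
    intro σ hσ
    rcases Nat.lt_or_ge 1 n with h2 | hle
    · have htri : ∀ a b : Fin n, a ≠ b →
          extLt (extF^[a.val] (t, false)) (extF^[b.val] (t, false)) ∨
            extLt (extF^[b.val] (t, false)) (extF^[a.val] (t, false)) := by
        intro a b hab
        apply extLt_total
        intro hc
        exact hab (hinj hc)
      have hasym : ∀ a b : Fin n,
          extLt (extF^[a.val] (t, false)) (extF^[b.val] (t, false)) →
          ¬ extLt (extF^[b.val] (t, false)) (extF^[a.val] (t, false)) :=
        fun a b h => extLt_asymm h
      have htrans : ∀ a b c : Fin n,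
          extLt (extF^[a.val] (t, false)) (extF^[b.val] (t, false)) →
          extLt (extF^[b.val] (t, false)) (extF^[c.val] (t, false)) →
          extLt (extF^[a.val] (t, false)) (extF^[c.val] (t, false)) :=
        fun a b c h h' => extLt_trans h h'
      refine ⟨built_cyclic htri hasym htrans hσ, ?_⟩
      refine built_unimodal htri hasym htrans hσ npos
        (fun p => p.1 ⟨1, h2⟩ = true) ?_ ?_ ?_
      · intro a b hab hP
        rcases hab with hab | ⟨he, hb⟩
        · exact strLt_digit1 h2
            ((orbit_head_ext h1 a.val).trans (orbit_head_ext h1 b.val).symm) hab hP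
        · rw [← he]
          exact hP
      · intro a b hab hP
        show extLt (extF^[(finSucc a).val] (t, false)) (extF^[(finSucc b).val] (t, false))
        rw [extOrbit_step h1 a, extOrbit_step h1 b]
        exact extF_mono h2 (orbit_head_ext h1 a.val) (orbit_head_ext h1 b.val) hP hab
      · intro a b hab hP
        show extLt (extF^[(finSucc b).val] (t, false)) (extF^[(finSucc a).val] (t, false))
        rw [extOrbit_step h1 a, extOrbit_step h1 b]
        refine extF_anti h2 (orbit_head_ext h1 a.val) (orbit_head_ext h1 b.val) ?_ hab
        cases hx : (extF^[b.val] (t, false)).1 ⟨1, h2⟩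
        · rfl
        · exact absurd hx hP
    · exact CUP_of_one (by have := npos (n := n); omega) σ

end Necklaces
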